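/- Let N ≥ 1 be a natural number, let a ∈ ℤ, and let S = {a, a+1, …, a+N−1} be a set of N successive vertices of the line graph ℤ. Then for every φ : ℤ → ℂ with support contained in S, (∑_{k∈ℤ} |φ(k)|²)^{1/2} ≤ (1/2)·sin^{−2}(π/(2N+2))·(∑_{k∈ℤ} |(𝓛φ)(k)|²)^{1/2}, where (𝓛φ)(k) = φ(k) − (φ(k−1) + φ(k+1))/2; that is, S is a Λ-set with Λ = (1/2)·sin^{−2}(π/(2|S|+2)). -/

import Mathlib

open scoped Real

/-- The normalized Laplacian of the line graph `ℤ`: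
`(𝓛 f) k = f k − (f (k−1) + f (k+1))/2`. -/
noncomputable def lapZ (f : ℤ → ℂ) (k : ℤ) : ℂ :=
  f k - (f (k - 1) + f (k + 1)) / 2

private lemma conj_mul_self_re (z : ℂ) : ((starRingEnd ℂ) z * z).re = ‖z‖^2 := by
  simp [Complex.mul_re, Complex.conj_re, Complex.conj_im,
    Complex.sq_norm, Complex.normSq_apply]

private lemma conj_mul_re_swap (z w : ℂ) :
    ((starRingEnd ℂ) z * w).re = ((starRingEnd ℂ) w * z).re := by
  simp [Complex.mul_re, Complex.conj_re, Complex.conj_im]; ring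

private lemma conj_mul_re_le (z w : ℂ) : ((starRingEnd ℂ) z * w).re ≤ ‖z‖ * ‖w‖ := by
  calc ((starRingEnd ℂ) z * w).re ≤ ‖(starRingEnd ℂ) z * w‖ := Complex.re_le_norm _
    _ = ‖z‖ * ‖w‖ := by simp

private lemma lap_term_re (z u v : ℂ) :
    ((starRingEnd ℂ) z * (z - (u + v) / 2)).re =
      ((starRingEnd ℂ) z * z).re - (1/2) * ((starRingEnd ℂ) z * u).re
        - (1/2) * ((starRingEnd ℂ) z * v).re := by
  have h : (starRingEnd ℂ) z * (z - (u + v) / 2)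
      = (starRingEnd ℂ) z * z - ((starRingEnd ℂ) z * u) / 2 - ((starRingEnd ℂ) z * v) / 2 := by
    ring
  rw [h, Complex.sub_re, Complex.sub_re]
  simp [Complex.div_re]
  ring

private lemma amgm (x y t : ℝ) (ht : 0 < t) :
    x * y ≤ (1/2) * (t * x ^ 2 + t⁻¹ * y ^ 2) := by
  have h1 : t * t⁻¹ = 1 := mul_inv_cancel₀ ht.ne'
  nlinarith [sq_nonneg (t * x - y), mul_pos ht ht]

private lemma wirtinger (N : ℕ) (g : ℕ → ℝ) (hg : ∀ j, 0 ≤ g j) (hgN : g N = 0) :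
    ∑ j ∈ Finset.range N, g j * g (j+1) ≤
      Real.cos (π / (N+1)) * ∑ j ∈ Finset.range N, g j ^ 2 := by
  set θ : ℝ := π / (N+1) with hθ
  have hN1 : (0:ℝ) < (N:ℝ) + 1 := by positivity
  have hθpos : 0 < θ := by positivity
  set w : ℕ → ℝ := fun i => Real.sin (i * θ) with hw
  have hw0 : w 0 = 0 := by simp [hw]
  have hwN1 : w (N+1) = 0 := by
    have : ((N:ℝ)+1) * θ = π := by rw [hθ]; field_simp
    simp [hw, this]
  have hwpos : ∀ i : ℕ, 1 ≤ i → i ≤ N → 0 < w i := by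
    intro i h1 h2
    apply Real.sin_pos_of_pos_of_lt_pi
    · have : (1:ℝ) ≤ (i:ℝ) := by exact_mod_cast h1
      nlinarith
    · have hi : (i:ℝ) < (N:ℝ) + 1 := by exact_mod_cast Nat.lt_succ_of_le h2
      calc (i:ℝ) * θ < ((N:ℝ)+1) * θ := by nlinarith
        _ = π := by rw [hθ]; field_simp
  have hrec : ∀ i : ℕ, w (i+2) + w i = 2 * Real.cos θ * w (i+1) := by
    intro i
    have e1 : ((i:ℝ)+2) * θ = ((i:ℝ)+1)*θ + θ := by ring
    have e2 : (i:ℝ) * θ = ((i:ℝ)+1)*θ - θ := by ring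
    simp only [hw]
    push_cast
    rw [e1, e2, Real.sin_add, Real.sin_sub]
    ring
  have step : ∀ j ∈ Finset.range N, g j * g (j+1) ≤
      (1/2) * (w (j+2) / w (j+1) * g j ^ 2 + (w (j+2) / w (j+1))⁻¹ * g (j+1) ^ 2) := by
    intro j hj
    rw [Finset.mem_range] at hj
    by_cases hlast : j + 1 = N
    · have hg1 : g (j+1) = 0 := by rw [hlast]; exact hgN
      have hw2 : w (j+2) = 0 := by
        have : j + 2 = N + 1 := by omega
        rw [this]; exact hwN1
      simp [hg1, hw2]
    · have h2 : j + 2 ≤ N := by omega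
      have hu : 0 < w (j+1) := hwpos _ (by omega) (by omega)
      have hv : 0 < w (j+2) := hwpos _ (by omega) h2
      exact amgm _ _ _ (by positivity)
  calc ∑ j ∈ Finset.range N, g j * g (j+1)
      ≤ ∑ j ∈ Finset.range N,
        (1/2) * (w (j+2) / w (j+1) * g j ^ 2 + (w (j+2) / w (j+1))⁻¹ * g (j+1) ^ 2) :=
        Finset.sum_le_sum step
    _ = ∑ j ∈ Finset.range N, Real.cos θ * g j ^ 2 := by
        have hB : ∀ j ∈ Finset.range N, (1/2) * ((w (j+2) / w (j+1))⁻¹ * g (j+1) ^ 2)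
            = (1/2) * (w (j+1) / w (j+2) * g (j+1) ^ 2) := by
          intro j _; rw [inv_div]
        rw [Finset.sum_congr rfl (fun j hj => by rw [mul_add, hB j hj])]
        rw [Finset.sum_add_distrib]
        have hshift : ∑ j ∈ Finset.range N, (1/2) * (w (j+1) / w (j+2) * g (j+1) ^ 2)
            = ∑ j ∈ Finset.range N, (1/2) * (w j / w (j+1) * g j ^ 2) := by
          set B : ℕ → ℝ := fun i => (1/2) * (w i / w (i+1) * g i ^ 2) with hBdef
          have h1 : ∑ j ∈ Finset.range (N+1), B j
              = (∑ j ∈ Finset.range N, B (j+1)) + B 0 := Finset.sum_range_succ' B N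
          have h2 : ∑ j ∈ Finset.range (N+1), B j
              = (∑ j ∈ Finset.range N, B j) + B N := Finset.sum_range_succ B N
          have hB0 : B 0 = 0 := by simp [hBdef, hw0]
          have hBN : B N = 0 := by simp [hBdef, hgN]
          have := h1.symm.trans h2
          rw [hB0, hBN, add_zero, add_zero] at this
          exact this
        rw [hshift, ← Finset.sum_add_distrib]
        apply Finset.sum_congr rfl
        intro j hj
        rw [Finset.mem_range] at hj
        have hu : w (j+1) ≠ 0 := (hwpos _ (by omega) (by omega)).ne'
        have hr := hrec j
        field_simp
        nlinarith [hr]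
    _ = Real.cos θ * ∑ j ∈ Finset.range N, g j ^ 2 := by rw [Finset.mul_sum]

/-- A set `S = {a, …, a+N−1}` of `N ≥ 1` successive vertices of `ℤ` is a
`Λ`-set with `Λ = (1/2)·sin⁻²(π/(2N+2))`. -/
theorem interval_lambda_set (N : ℕ) (hN : 1 ≤ N) (a : ℤ) (φ : ℤ → ℂ)
    (hsupp : ∀ k : ℤ, k ∉ Set.Icc a (a + N - 1) → φ k = 0) :
    Real.sqrt (∑' k : ℤ, ‖φ k‖ ^ 2) ≤
      (1 / 2) * (Real.sin (π / (2 * N + 2))) ⁻¹ ^ 2 * Real.sqrt (∑' k : ℤ, ‖lapZ φ k‖ ^ 2) := by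
  classical
  have hsupp' : ∀ k : ℤ, (k < a ∨ a + N - 1 < k) → φ k = 0 := by
    intro k hk
    apply hsupp
    rw [Set.mem_Icc]
    omega
  -- the support finsets
  have hinj : Function.Injective (fun j : ℕ => a + (j:ℤ)) := by
    intro x y h
    simp only at h
    omega
  set e : ℕ ↪ ℤ := ⟨fun j : ℕ => a + (j:ℤ), hinj⟩ with he
  set s : Finset ℤ := (Finset.range N).map e with hs
  have hmem : ∀ k : ℤ, k ∉ s → φ k = 0 := by
    intro k hk
    apply hsupp'
    by_contra hcon
    push_neg at hcon
    apply hk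
    rw [hs, Finset.mem_map]
    exact ⟨(k - a).toNat, Finset.mem_range.2 (by omega), by simp [he]; omega⟩
  -- the Laplacian support
  have hL0 : ∀ k : ℤ, (k < a - 1 ∨ a + N < k) → lapZ φ k = 0 := by
    intro k hk
    unfold lapZ
    rw [hsupp' k (by omega), hsupp' (k-1) (by omega), hsupp' (k+1) (by omega)]
    simp
  set e' : ℕ ↪ ℤ := ⟨fun j : ℕ => (a - 1) + (j:ℤ), by intro x y h; simp only at h; omega⟩
  set s' : Finset ℤ := (Finset.range (N+2)).map e' with hs'
  have hLmem : ∀ k : ℤ, k ∉ s' → ‖lapZ φ k‖^2 = 0 := by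
    intro k hk
    have : lapZ φ k = 0 := by
      apply hL0
      by_contra hcon
      push_neg at hcon
      apply hk
      rw [hs', Finset.mem_map]
      exact ⟨(k - (a-1)).toNat, Finset.mem_range.2 (by omega), by show a - 1 + ((k - (a-1)).toNat : ℤ) = k; omega⟩
    rw [this]; simp
  have hLsummable : Summable (fun k : ℤ => ‖lapZ φ k‖^2) :=
    summable_of_ne_finset_zero hLmem
  -- key real quantities
  set g : ℕ → ℝ := fun j => ‖φ (a + (j:ℤ))‖ with hg
  set P : ℝ := ∑ j ∈ Finset.range N, g j ^ 2 with hP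
  set R : ℝ := ∑ j ∈ Finset.range N, ‖lapZ φ (a + (j:ℤ))‖ ^ 2 with hR
  have hPsum : ∑' k : ℤ, ‖φ k‖ ^ 2 = P := by
    rw [tsum_eq_sum (s := s) (fun k hk => by rw [hmem k hk]; simp)]
    rw [hs, Finset.sum_map]
    rfl
  have hQge : R ≤ ∑' k : ℤ, ‖lapZ φ k‖ ^ 2 := by
    have h := Summable.sum_le_tsum s (fun k _ => by positivity) hLsummable
    rw [hs, Finset.sum_map] at h
    exact h
  have hgnn : ∀ j, 0 ≤ g j := fun j => norm_nonneg _
  have hφN : φ (a + (N:ℤ)) = 0 := hsupp' _ (by omega)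
  have hgN : g N = 0 := by rw [hg]; simp [hφN]
  have hφm1 : φ (a - 1) = 0 := hsupp' _ (by omega)
  -- correlation sums
  set T : ℕ → ℝ := fun j => ((starRingEnd ℂ) (φ (a + (j:ℤ))) * φ (a + (j:ℤ) + 1)).re with hT
  set S : ℕ → ℝ := fun j => ((starRingEnd ℂ) (φ (a + (j:ℤ))) * φ (a + (j:ℤ) - 1)).re with hS
  set C1 : ℝ := ∑ j ∈ Finset.range N, ((starRingEnd ℂ) (φ (a + (j:ℤ))) * lapZ φ (a + (j:ℤ))).re
    with hC1
  obtain ⟨M, rfl⟩ : ∃ M, N = M + 1 := ⟨N - 1, by omega⟩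
  have hTM : T M = 0 := by
    rw [hT]
    simp only
    have : a + (M:ℤ) + 1 = a + ((M+1 : ℕ) : ℤ) := by push_cast; ring
    rw [this, hφN]
    simp
  have hSsum : ∑ j ∈ Finset.range (M+1), S j = ∑ j ∈ Finset.range M, T j := by
    rw [Finset.sum_range_succ' S M]
    have hS0 : S 0 = 0 := by
      simp [hS, hφm1]
    rw [hS0, add_zero]
    apply Finset.sum_congr rfl
    intro j _
    rw [hS, hT]
    simp only
    have h1 : a + ((j+1 : ℕ) : ℤ) - 1 = a + (j:ℤ) := by push_cast; ring
    have h2 : a + ((j+1 : ℕ) : ℤ) = a + (j:ℤ) + 1 := by push_cast; ring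
    rw [h1, h2]
    exact conj_mul_re_swap _ _
  have hTsum : ∑ j ∈ Finset.range (M+1), T j = ∑ j ∈ Finset.range M, T j := by
    rw [Finset.sum_range_succ, hTM, add_zero]
  -- C1 = P - ∑ T
  have hC1eq : C1 = P - ∑ j ∈ Finset.range M, T j := by
    rw [hC1]
    have hterm : ∀ j ∈ Finset.range (M+1),
        ((starRingEnd ℂ) (φ (a + (j:ℤ))) * lapZ φ (a + (j:ℤ))).re
          = g j ^ 2 - (1/2) * S j - (1/2) * T j := by
      intro j _
      unfold lapZ
      rw [lap_term_re, conj_mul_self_re]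
    rw [Finset.sum_congr rfl hterm]
    rw [Finset.sum_sub_distrib, Finset.sum_sub_distrib, ← Finset.mul_sum, ← Finset.mul_sum]
    rw [hSsum, hTsum, ← hP]
    ring
  -- lower bound for C1
  set θ : ℝ := π / ((M:ℝ) + 1 + 1) with hθ
  have hcosθ : Real.cos (π / (((M+1 : ℕ):ℝ) + 1)) = Real.cos θ := by
    norm_num [hθ]
  have hTle : ∑ j ∈ Finset.range M, T j ≤ Real.cos θ * P := by
    have h1 : ∀ j ∈ Finset.range M, T j ≤ g j * g (j+1) := by
      intro j _
      rw [hT, hg]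
      simp only
      have h2 : a + ((j+1 : ℕ) : ℤ) = a + (j:ℤ) + 1 := by push_cast; ring
      rw [h2]
      exact conj_mul_re_le _ _
    calc ∑ j ∈ Finset.range M, T j ≤ ∑ j ∈ Finset.range M, g j * g (j+1) :=
          Finset.sum_le_sum h1
      _ ≤ ∑ j ∈ Finset.range (M+1), g j * g (j+1) := by
          apply Finset.sum_le_sum_of_subset_of_nonneg
          · exact Finset.range_subset_range.2 (by omega)
          · intro j _ _
            exact mul_nonneg (hgnn j) (hgnn (j+1))
      _ ≤ Real.cos (π / (((M+1:ℕ) :ℝ) + 1)) * ∑ j ∈ Finset.range (M+1), g j ^ 2 :=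
          wirtinger (M+1) g hgnn hgN
      _ = Real.cos θ * P := by rw [hcosθ, hP]
  have hlow : (1 - Real.cos θ) * P ≤ C1 := by
    rw [hC1eq]
    nlinarith [hTle]
  -- Cauchy-Schwarz upper bound for C1
  have hCS : C1 ≤ Real.sqrt P * Real.sqrt R := by
    have h1 : C1 ≤ ∑ j ∈ Finset.range (M+1), g j * ‖lapZ φ (a + (j:ℤ))‖ := by
      rw [hC1]
      apply Finset.sum_le_sum
      intro j _
      exact conj_mul_re_le _ _
    have h2 := Finset.sum_mul_sq_le_sq_mul_sq (Finset.range (M+1)) g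
      (fun j => ‖lapZ φ (a + (j:ℤ))‖)
    have h3 := Real.sqrt_le_sqrt h2
    rw [Real.sqrt_sq (Finset.sum_nonneg fun j _ =>
      mul_nonneg (hgnn j) (norm_nonneg _))] at h3
    rw [Real.sqrt_mul (Finset.sum_nonneg fun j _ => by positivity)] at h3
    exact h1.trans (h3.trans_eq (by rw [hP, hR]))
  -- put it together
  rw [hPsum]
  set s₀ : ℝ := Real.sin (π / (2 * ((M+1:ℕ):ℝ) + 2)) with hs₀
  have hM1 : (0:ℝ) < 2 * ((M+1:ℕ):ℝ) + 2 := by positivity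
  have hs₀pos : 0 < s₀ := by
    rw [hs₀]
    apply Real.sin_pos_of_pos_of_lt_pi
    · positivity
    · apply div_lt_self Real.pi_pos
      push_cast
      nlinarith
  have hhalf : θ / 2 = π / (2 * ((M+1:ℕ):ℝ) + 2) := by
    rw [hθ, div_div]
    congr 1
    push_cast
    ring
  have hcos2 : 1 - Real.cos θ = 2 * s₀ ^ 2 := by
    have h1 := Real.sin_sq_eq_half_sub (θ / 2)
    have h2 : 2 * (θ / 2) = θ := by ring
    rw [h2, hhalf] at h1
    rw [hs₀, h1]
    ring
  have hPnn : 0 ≤ P := Finset.sum_nonneg fun j _ => sq_nonneg _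
  have hchain : 2 * s₀^2 * P ≤ Real.sqrt P * Real.sqrt (∑' k : ℤ, ‖lapZ φ k‖ ^ 2) := by
    have h4 : Real.sqrt R ≤ Real.sqrt (∑' k : ℤ, ‖lapZ φ k‖ ^ 2) := Real.sqrt_le_sqrt hQge
    calc 2 * s₀^2 * P = (1 - Real.cos θ) * P := by rw [hcos2]
      _ ≤ C1 := hlow
      _ ≤ Real.sqrt P * Real.sqrt R := hCS
      _ ≤ Real.sqrt P * Real.sqrt (∑' k : ℤ, ‖lapZ φ k‖ ^ 2) :=
          mul_le_mul_of_nonneg_left h4 (Real.sqrt_nonneg _)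
  set q : ℝ := Real.sqrt (∑' k : ℤ, ‖lapZ φ k‖ ^ 2) with hq
  have hqnn : 0 ≤ q := Real.sqrt_nonneg _
  set p : ℝ := Real.sqrt P with hpdef
  have hp2 : p * p = P := Real.mul_self_sqrt hPnn
  by_cases hp0 : p = 0
  · rw [hp0]
    positivity
  · have hppos : 0 < p := lt_of_le_of_ne (Real.sqrt_nonneg _) (Ne.symm hp0)
    have key : 2 * s₀^2 * p ≤ q := by
      have h5 : (2 * s₀^2 * p) * p ≤ q * p := by
        calc (2 * s₀^2 * p) * p = 2 * s₀^2 * P := by rw [← hp2]; ring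
          _ ≤ p * q := hchain
          _ = q * p := by ring
      exact le_of_mul_le_mul_right h5 hppos
    have hfin : (1/2) * (s₀⁻¹)^2 * (2 * s₀^2 * p) = p := by
      field_simp
    calc p = (1/2) * (s₀⁻¹)^2 * (2 * s₀^2 * p) := hfin.symm
      _ ≤ (1/2) * (s₀⁻¹)^2 * q := by
          apply mul_le_mul_of_nonneg_left key
          positivity
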